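/- Let (b_1, b_2) and (c_1, c_2) be pairs of positive integers with b_1 < b_2, c_1 < c_2. Define A(b_1,b_2;c_1,c_2) = 1 if b_2 = c_2 and b_1 ≤ c_1, else 0. Define B_1(b_1,b_2;c_1,c_2) = ∑_{(d_1,d_2)∈S_2} A(d_1,d_2;c_1,c_2) {d_1 d_2; b_1 b_2} (1-t)^{(c_1-d_1)+(c_2-d_2)} where {d_1 d_2; b_1 b_2} = [d_1,b_1][d_2,b_2] − [d_2,b_1][d_1,b_2]. Then B_1(b_1,b_2;c_1,c_2) = [c_2,b_2] if b_1 ≤ c_1 ≤ b_2 − 1, and B_1(b_1,b_2;c_1,c_2) = 0 if c_1 < b_1 or c_1 ≥ b_2. -/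

import Mathlib

open Polynomial Finset

/-- Bracket symbol: `t` if `c > b`, `1` if `c = b`, `0` if `c < b` (here `t = X ∈ ℚ[t]`). -/
noncomputable def brk (c b : ℕ) : Polynomial ℚ :=
  if b < c then X else if c = b then 1 else 0

/-- Antisymmetrized tuple bracket `{c; b} = ∑_σ sign(σ) ∏ᵢ [c_{σ(i)}, bᵢ]`. -/
noncomputable def braceT {l : ℕ} (c b : Fin l → ℕ) : Polynomial ℚ :=
  ∑ σ : Equiv.Perm (Fin l), (Equiv.Perm.sign σ : ℤ) • ∏ i, brk (c (σ i)) (b i)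

/-- The recursively defined coefficient `A(b; c)`:  for `l = 2`, `A = 1` iff `b₂ = c₂` and
`b₁ ≤ c₁`; for `l > 2`, `A(b;c) = 0` if the last entries differ, and otherwise it is the sum
of `A` on the truncations over all strictly increasing `(l-1)`-tuples `c'` of positive
integers with `c' ≤ (c₁, …, c_{l-1})` componentwise. -/
def Acoef : (l : ℕ) → (Fin l → ℕ) → (Fin l → ℕ) → ℕ
  | 0, _, _ => 0
  | 1, _, _ => 0
  | 2, b, c => if b 1 = c 1 ∧ b 0 ≤ c 0 then 1 else 0
  | l + 3, b, c =>
    if b (Fin.last (l + 2)) = c (Fin.last (l + 2)) then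
      ∑ c' ∈ (Finset.Icc (fun _ => 1) (fun j : Fin (l + 2) => c j.castSucc)).filter
          (fun c' => ∀ i j : Fin (l + 2), i < j → c' i < c' j),
        Acoef (l + 2) (fun j => b j.castSucc) c'
    else 0

/-- Finite index set covering all pairs `(d₁,d₂) ∈ S₂` giving nonzero terms. -/
def S2box (b2 c2 : ℕ) : Finset (ℕ × ℕ) :=
  ((Finset.range (b2 + c2 + 2)) ×ˢ (Finset.range (b2 + c2 + 2))).filter
    (fun d => 1 ≤ d.1 ∧ d.1 < d.2)

lemma perm_univ_two : (Finset.univ : Finset (Equiv.Perm (Fin 2))) = {1, Equiv.swap 0 1} := by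
  decide

lemma braceT_two (a b x y : ℕ) :
    braceT ![a, b] ![x, y] = brk a x * brk b y - brk b x * brk a y := by
  rw [braceT, perm_univ_two, Finset.sum_pair (by decide)]
  simp [Fin.prod_univ_two, Equiv.swap_apply_left, Equiv.swap_apply_right]
  ring

lemma Acoef_two (d1 d2 c1 c2 : ℕ) :
    (Acoef 2 ![d1, d2] ![c1, c2] : Polynomial ℚ)
      = if d2 = c2 ∧ d1 ≤ c1 then 1 else 0 := by
  rw [Acoef]
  simp only [Matrix.cons_val_one, Matrix.head_cons, Matrix.cons_val_zero]
  by_cases h : d2 = c2 <;> by_cases h' : d1 ≤ c1 <;> simp [h, h']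

lemma brk_lt (c b : ℕ) (h : b < c) : brk c b = X := by simp [brk, h]

lemma brk_eq (b : ℕ) : brk b b = 1 := by simp [brk]

lemma brk_gt (c b : ℕ) (h : c < b) : brk c b = 0 := by
  simp [brk, h.not_gt, h.ne]

/-- Key geometric-series computation. -/
lemma sum_brk (b c : ℕ) (hb : 1 ≤ b) :
    ∑ d ∈ Icc 1 c, brk d b * (1 - X : Polynomial ℚ) ^ (c - d)
      = if b ≤ c then 1 else 0 := by
  induction c with
  | zero =>
    rw [if_neg (by omega)]
    simp [show Icc 1 0 = (∅ : Finset ℕ) by simp]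
  | succ c ih =>
    have hins : Icc 1 (c + 1) = insert (c + 1) (Icc 1 c) := by
      ext x
      simp only [Finset.mem_Icc, Finset.mem_insert]
      omega
    rw [hins, Finset.sum_insert (by simp)]
    have hrest : ∑ d ∈ Icc 1 c, brk d b * (1 - X : Polynomial ℚ) ^ (c + 1 - d)
        = (1 - X) * ∑ d ∈ Icc 1 c, brk d b * (1 - X : Polynomial ℚ) ^ (c - d) := by
      rw [Finset.mul_sum]
      refine Finset.sum_congr rfl fun d hd => ?_
      simp only [Finset.mem_Icc] at hd
      have : c + 1 - d = (c - d) + 1 := by omega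
      rw [this, pow_succ]
      ring
    rw [hrest, ih]
    rcases lt_trichotomy b (c + 1) with h | h | h
    · rw [brk_lt _ _ h, if_pos (by omega), if_pos (by omega)]
      simp
    · rw [h, brk_eq, if_pos le_rfl, if_neg (by omega)]
      simp
    · rw [brk_gt _ _ h, if_neg (by omega), if_neg (by omega)]
      ring

theorem B1_pair (b1 b2 c1 c2 : ℕ) (hb1 : 1 ≤ b1) (hb : b1 < b2)
    (hc1 : 1 ≤ c1) (hc : c1 < c2) :
    ((b1 ≤ c1 → c1 ≤ b2 - 1 →
      (∑ d ∈ S2box b2 c2,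
          (Acoef 2 ![d.1, d.2] ![c1, c2] : Polynomial ℚ) * braceT ![d.1, d.2] ![b1, b2] *
            (1 - X) ^ ((c1 - d.1) + (c2 - d.2))) = brk c2 b2) ∧
    (c1 < b1 ∨ b2 ≤ c1 →
      (∑ d ∈ S2box b2 c2,
          (Acoef 2 ![d.1, d.2] ![c1, c2] : Polynomial ℚ) * braceT ![d.1, d.2] ![b1, b2] *
            (1 - X) ^ ((c1 - d.1) + (c2 - d.2))) = 0)) := by
  set g : ℕ × ℕ → Polynomial ℚ := fun d =>
    (Acoef 2 ![d.1, d.2] ![c1, c2] : Polynomial ℚ) * braceT ![d.1, d.2] ![b1, b2] *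
      (1 - X) ^ ((c1 - d.1) + (c2 - d.2)) with hg
  have key : ∑ d ∈ S2box b2 c2, g d
      = brk c2 b2 * (∑ d1 ∈ Icc 1 c1, brk d1 b1 * (1 - X : Polynomial ℚ) ^ (c1 - d1))
        - brk c2 b1 * (∑ d1 ∈ Icc 1 c1, brk d1 b2 * (1 - X : Polynomial ℚ) ^ (c1 - d1)) := by
    have himg : ∑ d ∈ S2box b2 c2, g d
        = ∑ d ∈ (Icc 1 c1).image (fun d1 => (d1, c2)), g d := by
      symm
      apply Finset.sum_subset
      · intro d hd
        simp only [Finset.mem_image, Finset.mem_Icc] at hd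
        obtain ⟨d1, ⟨h1, h2⟩, rfl⟩ := hd
        simp only [S2box, Finset.mem_filter, Finset.mem_product, Finset.mem_range]
        exact ⟨⟨by omega, by omega⟩, h1, by omega⟩
      · intro d hdbox hd
        simp only [S2box, Finset.mem_filter] at hdbox
        simp only [Finset.mem_image, Finset.mem_Icc] at hd
        have hA : (Acoef 2 ![d.1, d.2] ![c1, c2] : Polynomial ℚ) = 0 := by
          rw [Acoef_two, if_neg]
          rintro ⟨h1, h2⟩
          exact hd ⟨d.1, ⟨hdbox.2.1, h2⟩, Prod.ext rfl h1.symm⟩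
        simp [hg, hA]
    rw [himg, Finset.sum_image (by intro a _ b _ h; simpa using h)]
    simp only [hg]
    rw [Finset.mul_sum, Finset.mul_sum, ← Finset.sum_sub_distrib]
    refine Finset.sum_congr rfl fun d1 hd1 => ?_
    simp only [Finset.mem_Icc] at hd1
    rw [Acoef_two, if_pos ⟨rfl, hd1.2⟩, braceT_two, Nat.sub_self, add_zero]
    ring
  constructor
  · intro h1 h2
    have hc1b2 : c1 < b2 := by omega
    have hB2 : ∑ d1 ∈ Icc 1 c1, brk d1 b2 * (1 - X : Polynomial ℚ) ^ (c1 - d1) = 0 := by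
      rw [sum_brk b2 c1 (by omega), if_neg (by omega)]
    rw [key, sum_brk b1 c1 hb1, if_pos h1, hB2]
    ring
  · rintro (h | h)
    · have hB1 : ∑ d1 ∈ Icc 1 c1, brk d1 b1 * (1 - X : Polynomial ℚ) ^ (c1 - d1) = 0 := by
        rw [sum_brk b1 c1 hb1, if_neg (by omega)]
      have hB2 : ∑ d1 ∈ Icc 1 c1, brk d1 b2 * (1 - X : Polynomial ℚ) ^ (c1 - d1) = 0 := by
        rw [sum_brk b2 c1 (by omega), if_neg (by omega)]
      rw [key, hB1, hB2]
      ring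
    · rw [key, sum_brk b1 c1 hb1, if_pos (by omega), sum_brk b2 c1 (by omega),
        if_pos h, brk_lt c2 b2 (by omega), brk_lt c2 b1 (by omega)]
      ring
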